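/- Theorem 2.2(b) (PDG for problems that need not be strongly convex): Suppose μ ≥ 0 and L_f > 0, and run the PDG iteration with the parameters τ_t = (t−1)/2, η_t = 4L_f/t, and α_t = (t−1)/t for t = 1, …, k. Let θ_t = t and x̄^k = (Σ_{t=1}^k θ_t)^{-1} Σ_{t=1}^k θ_t x^t = (2/(k(k+1))) Σ_{t=1}^k t·x^t. Then for every k ≥ 1 and every optimal solution x* of min_{x∈X} Ψ(x), one has Ψ(x̄^k) − Ψ(x*) ≤ (8L_f/(k(k+1))) · P(x^0, x*). -/

import Mathlib

open scoped RealInnerProductSpace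
open Filter Set
open scoped Topology

variable {n : ℕ}

local notation "E" => EuclideanSpace ℝ (Fin n)

private lemma pdgLineDeriv {f : E → ℝ} {p a d : E} {s : ℝ}
    (hf : HasGradientAt f p (a + s • d)) :
    HasDerivAt (fun r : ℝ => f (a + r • d)) ⟪p, d⟫ s := by
  have h1 : HasDerivAt (fun r : ℝ => a + r • d) d s := by
    simpa using ((hasDerivAt_id s).smul_const d).const_add a
  have h2 := (hasGradientAt_iff_hasFDerivAt.mp hf).comp_hasDerivAt s h1
  simpa [InnerProductSpace.toDual_apply_apply, Function.comp_def] using h2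

/-- Descent lemma: quadratic upper bound from Lipschitz gradient. -/
private lemma pdgDescent {f : E → ℝ} {f' : E → E} {Lf : ℝ} (hLf : 0 < Lf)
    (hdiff : ∀ u, HasGradientAt f (f' u) u)
    (hlip : ∀ u v, ‖f' u - f' v‖ ≤ Lf * ‖u - v‖) (a b : E) :
    f b ≤ f a + ⟪f' a, b - a⟫ + Lf / 2 * ‖b - a‖ ^ 2 := by
  set d := b - a with hd
  set φ : ℝ → ℝ := fun r => f (a + r • d) - r * ⟪f' a, d⟫ - r ^ 2 * (Lf * ‖d‖ ^ 2 / 2)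
    with hφdef
  have hφ : ∀ r : ℝ, HasDerivAt φ
      (⟪f' (a + r • d), d⟫ - ⟪f' a, d⟫ - r * (Lf * ‖d‖ ^ 2)) r := by
    intro r
    have h1 := pdgLineDeriv (hdiff (a + r • d))
    have h2 : HasDerivAt (fun r : ℝ => r * ⟪f' a, d⟫) ⟪f' a, d⟫ r := by
      simpa using (hasDerivAt_id r).mul_const (⟪f' a, d⟫)
    have h3 : HasDerivAt (fun r : ℝ => r ^ 2 * (Lf * ‖d‖ ^ 2 / 2)) (r * (Lf * ‖d‖ ^ 2)) r := by
      have := (hasDerivAt_pow 2 r).mul_const (Lf * ‖d‖ ^ 2 / 2)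
      exact this.congr_deriv (by ring)
    exact (h1.sub h2).sub h3
  have anti : AntitoneOn φ (Set.Ici (0 : ℝ)) := by
    refine antitoneOn_of_deriv_nonpos (convex_Ici 0)
      (fun r _ => (hφ r).differentiableAt.continuousAt.continuousWithinAt)
      (fun r _ => (hφ r).differentiableAt.differentiableWithinAt) ?_
    intro r hr
    rw [interior_Ici] at hr
    have hr' : (0 : ℝ) < r := hr
    rw [(hφ r).deriv]
    have hcs : ⟪f' (a + r • d), d⟫ - ⟪f' a, d⟫ ≤ ‖f' (a + r • d) - f' a‖ * ‖d‖ := by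
      rw [← inner_sub_left]
      exact real_inner_le_norm _ _
    have hl : ‖f' (a + r • d) - f' a‖ ≤ Lf * (r * ‖d‖) := by
      have := hlip (a + r • d) a
      simpa [norm_smul, abs_of_pos hr'] using this
    have hdn : (0 : ℝ) ≤ ‖d‖ := norm_nonneg _
    nlinarith [mul_le_mul_of_nonneg_right hl hdn]
  have h01 := anti (Set.mem_Ici.mpr le_rfl) (Set.mem_Ici.mpr zero_le_one) zero_le_one
  have e0 : φ 0 = f a := by simp [hφdef]
  have e1 : φ 1 = f b - ⟪f' a, d⟫ - Lf * ‖d‖ ^ 2 / 2 := by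
    simp only [hφdef, hd, one_smul, one_pow, one_mul, add_sub_cancel]
    try ring
  rw [e0, e1] at h01
  linarith

/-- Gradient inequality for convex functions. -/
private lemma pdgConvexLower {f : E → ℝ} {f' : E → E} (hconv : ConvexOn ℝ Set.univ f)
    (hdiff : ∀ u, HasGradientAt f (f' u) u) (a b : E) :
    f a + ⟪f' a, b - a⟫ ≤ f b := by
  set d := b - a with hd
  have hder : HasDerivAt (fun r : ℝ => f (a + r • d)) ⟪f' a, d⟫ 0 := by
    have : HasGradientAt f (f' a) (a + (0 : ℝ) • d) := by simpa using hdiff a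
    exact pdgLineDeriv this
  have hslope : Tendsto (slope (fun r : ℝ => f (a + r • d)) 0) (𝓝[>] 0) (𝓝 ⟪f' a, d⟫) :=
    (hasDerivAt_iff_tendsto_slope.mp hder).mono_left
      (nhdsWithin_mono _ (fun r hr => ne_of_gt hr))
  have hev : ∀ᶠ r in 𝓝[>] (0 : ℝ), slope (fun r : ℝ => f (a + r • d)) 0 r ≤ f b - f a := by
    filter_upwards [Ioc_mem_nhdsGT (zero_lt_one : (0:ℝ) < 1)] with r hr
    have hr0 : (0 : ℝ) < r := hr.1
    have hr1 : r ≤ 1 := hr.2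
    have hcvx := hconv.2 (Set.mem_univ a) (Set.mem_univ b) (by linarith : (0:ℝ) ≤ 1 - r)
      hr0.le (by ring)
    have hpt : (1 - r) • a + r • b = a + r • d := by
      rw [hd]; module
    rw [hpt] at hcvx
    rw [slope_def_field]
    rw [div_le_iff₀ (by linarith : (0:ℝ) < r - 0)]
    simp only [zero_smul, add_zero]
    simp only [smul_eq_mul] at hcvx
    nlinarith
  have := le_of_tendsto hslope hev
  linarith

/-- Strong-convexity-type gradient inequality for `w` on `X`. -/
private lemma pdgStrong {X : Set E} (hXconvex : Convex ℝ X)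
    {w : E → ℝ} {w' : E → E} (hwdiff : ∀ u, HasGradientAt w (w' u) u)
    (hwstrong : ∀ u ∈ X, ∀ v ∈ X, (1 / 2) * ‖u - v‖ ^ 2 ≤ ⟪w' u - w' v, u - v⟫)
    {a b : E} (ha : a ∈ X) (hb : b ∈ X) :
    w a + ⟪w' a, b - a⟫ + (1 / 4) * ‖b - a‖ ^ 2 ≤ w b := by
  set d := b - a with hd
  have hmemr : ∀ r : ℝ, r ∈ Set.Icc (0:ℝ) 1 → a + r • d ∈ X := by
    intro r hr
    have := hXconvex ha hb (by linarith [hr.2] : (0:ℝ) ≤ 1 - r) hr.1 (by ring)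
    have hpt : (1 - r) • a + r • b = a + r • d := by rw [hd]; module
    rwa [hpt] at this
  set ψ : ℝ → ℝ := fun r => w (a + r • d) - r * ⟪w' a, d⟫ - r ^ 2 * (‖d‖ ^ 2 / 4)
    with hψdef
  have hψ : ∀ r : ℝ, HasDerivAt ψ
      (⟪w' (a + r • d), d⟫ - ⟪w' a, d⟫ - r * (‖d‖ ^ 2 / 2)) r := by
    intro r
    have h1 := pdgLineDeriv (hwdiff (a + r • d))
    have h2 : HasDerivAt (fun r : ℝ => r * ⟪w' a, d⟫) ⟪w' a, d⟫ r := by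
      simpa using (hasDerivAt_id r).mul_const (⟪w' a, d⟫)
    have h3 : HasDerivAt (fun r : ℝ => r ^ 2 * (‖d‖ ^ 2 / 4)) (r * (‖d‖ ^ 2 / 2)) r := by
      have := (hasDerivAt_pow 2 r).mul_const (‖d‖ ^ 2 / 4)
      exact this.congr_deriv (by ring)
    exact (h1.sub h2).sub h3
  have mono : MonotoneOn ψ (Set.Icc (0 : ℝ) 1) := by
    refine monotoneOn_of_deriv_nonneg (convex_Icc 0 1)
      (fun r _ => (hψ r).differentiableAt.continuousAt.continuousWithinAt)
      (fun r hr => (hψ r).differentiableAt.differentiableWithinAt) ?_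
    intro r hr
    rw [interior_Icc] at hr
    have hr0 : (0 : ℝ) < r := hr.1
    rw [(hψ r).deriv]
    have hmem : a + r • d ∈ X := hmemr r ⟨hr0.le, hr.2.le⟩
    have hst := hwstrong (a + r • d) hmem a ha
    have heq : a + r • d - a = r • d := by abel
    rw [heq] at hst
    rw [real_inner_smul_right, inner_sub_left] at hst
    have hns : ‖r • d‖ ^ 2 = r ^ 2 * ‖d‖ ^ 2 := by
      rw [norm_smul, mul_pow, Real.norm_eq_abs, sq_abs]
    rw [hns] at hst
    have : r * (‖d‖ ^ 2 / 2) ≤ ⟪w' (a + r • d), d⟫ - ⟪w' a, d⟫ := by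
      have h := (mul_le_mul_iff_of_pos_left hr0).mp (by nlinarith : r * (r * (‖d‖ ^ 2 / 2)) ≤ r * (⟪w' (a + r • d), d⟫ - ⟪w' a, d⟫))
      exact h
    linarith
  have h01 := mono (Set.mem_Icc.mpr ⟨le_rfl, zero_le_one⟩)
    (Set.mem_Icc.mpr ⟨zero_le_one, le_rfl⟩) zero_le_one
  have e0 : ψ 0 = w a := by simp [hψdef]
  have e1 : ψ 1 = w b - ⟪w' a, d⟫ - ‖d‖ ^ 2 / 4 := by
    simp only [hψdef, hd, one_smul, one_pow, one_mul, add_sub_cancel]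
    try ring
  rw [e0, e1] at h01
  linarith

set_option maxHeartbeats 2000000

/-- Theorem 2.2(b), PDG for problems that need not be strongly convex:
with `τ_t = (t-1)/2`, `η_t = 4L_f/t`, `α_t = (t-1)/t`, `θ_t = t`, and the
ergodic mean `x̄^k = (2/(k(k+1))) Σ_{t=1}^k t·x^t`, one has
`Ψ(x̄^k) - Ψ(x*) ≤ (8 L_f/(k(k+1))) P(x^0, x*)` for every `k ≥ 1`. -/
theorem pdg_nonstrongly_convex_bound
    {n : ℕ} (X : Set (EuclideanSpace ℝ (Fin n)))
    (hXne : X.Nonempty) (hXclosed : IsClosed X) (hXconvex : Convex ℝ X)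
    (f h w : EuclideanSpace ℝ (Fin n) → ℝ)
    (f' w' : EuclideanSpace ℝ (Fin n) → EuclideanSpace ℝ (Fin n))
    (μ Lf : ℝ) (hμ : 0 ≤ μ) (hLf : 0 < Lf)
    (hfconv : ConvexOn ℝ Set.univ f)
    (hfdiff : ∀ u, HasGradientAt f (f' u) u)
    (hfLip : ∀ u v, ‖f' u - f' v‖ ≤ Lf * ‖u - v‖)
    (hhconv : ConvexOn ℝ X h)
    (hwdiff : ∀ u, HasGradientAt w (w' u) u)
    (hwstrong : ∀ u ∈ X, ∀ v ∈ X, (1 / 2) * ‖u - v‖ ^ 2 ≤ ⟪w' u - w' v, u - v⟫)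
    (P : EuclideanSpace ℝ (Fin n) → EuclideanSpace ℝ (Fin n) → ℝ)
    (hP : ∀ x' xx, P x' xx = w xx - w x' - ⟪w' x', xx - x'⟫)
    (τ η α : ℕ → ℝ)
    (hτ : ∀ t, 1 ≤ t → τ t = ((t : ℝ) - 1) / 2)
    (hη : ∀ t, 1 ≤ t → η t = 4 * Lf / (t : ℝ))
    (hα : ∀ t, 1 ≤ t → α t = ((t : ℝ) - 1) / (t : ℝ))
    (x xt xu g : ℕ → EuclideanSpace ℝ (Fin n))
    (hx0 : x 0 ∈ X)
    (hxu0 : xu 0 = x 0)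
    (hxt : ∀ t, 1 ≤ t → xt t = α t • (x (t - 1) - x (t - 2)) + x (t - 1))
    (hxu : ∀ t, 1 ≤ t → xu t = (1 + τ t)⁻¹ • (xt t + τ t • xu (t - 1)))
    (hg : ∀ t, 1 ≤ t → g t = f' (xu t))
    (hxmem : ∀ t, 1 ≤ t → x t ∈ X)
    (hxmin : ∀ t, 1 ≤ t → ∀ u ∈ X,
      ⟪g t, x t⟫ + h (x t) + μ * w (x t) + η t * P (x (t - 1)) (x t) ≤
        ⟪g t, u⟫ + h u + μ * w u + η t * P (x (t - 1)) u)
    (xstar : EuclideanSpace ℝ (Fin n)) (hxstarX : xstar ∈ X)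
    (hopt : ∀ u ∈ X, f xstar + h xstar + μ * w xstar ≤ f u + h u + μ * w u)
    (k : ℕ) (hk : 1 ≤ k)
    (xbar : EuclideanSpace ℝ (Fin n))
    (hxbar : xbar = (2 / ((k : ℝ) * ((k : ℝ) + 1))) •
        ∑ t ∈ Finset.Icc 1 k, (t : ℝ) • x t) :
    (f xbar + h xbar + μ * w xbar) - (f xstar + h xstar + μ * w xstar) ≤
      8 * Lf / ((k : ℝ) * ((k : ℝ) + 1)) * P (x 0) xstar := by
  -- basic membership
  have hxtX : ∀ t : ℕ, x t ∈ X := by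
    intro t
    rcases Nat.eq_zero_or_pos t with h0 | hpos
    · subst h0; exact hx0
    · exact hxmem t hpos
  -- strong convexity inequality for w on X
  have hwineq : ∀ a ∈ X, ∀ b ∈ X,
      w a + ⟪w' a, b - a⟫ + (1 / 4) * ‖b - a‖ ^ 2 ≤ w b :=
    fun a ha b hb => pdgStrong hXconvex hwdiff hwstrong ha hb
  -- three-point identity
  have tp : ∀ p q r : EuclideanSpace ℝ (Fin n),
      ⟪w' q, r - q⟫ - ⟪w' p, r - q⟫ = P p r - P p q - P q r := by
    intro p q r
    simp only [hP, inner_sub_right]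
    ring
  -- first-order optimality (variational inequality) from value minimality
  have VI : ∀ s : ℕ, 1 ≤ s → ∀ u ∈ X,
      0 ≤ ⟪g s, u - x s⟫ + (h u - h (x s)) + μ * ⟪w' (x s), u - x s⟫
        + η s * (⟪w' (x s), u - x s⟫ - ⟪w' (x (s - 1)), u - x s⟫) := by
    intro s hs u hu
    have hsR : (0:ℝ) < (s:ℝ) := by exact_mod_cast hs
    have hηs : 0 < η s := by rw [hη s hs]; positivity
    have hzX : x s ∈ X := hxmem s hs
    have hder : HasDerivAt (fun r : ℝ => w (x s + r • (u - x s))) ⟪w' (x s), u - x s⟫ 0 := by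
      have : HasGradientAt w (w' (x s)) (x s + (0:ℝ) • (u - x s)) := by simpa using hwdiff (x s)
      exact pdgLineDeriv this
    have hslope : Filter.Tendsto (slope (fun r : ℝ => w (x s + r • (u - x s))) 0) (𝓝[>] 0)
        (𝓝 ⟪w' (x s), u - x s⟫) :=
      (hasDerivAt_iff_tendsto_slope.mp hder).mono_left
        (nhdsWithin_mono _ fun r hr => ne_of_gt hr)
    have hev : ∀ᶠ r in 𝓝[>] (0:ℝ),
        0 ≤ (⟪g s, u - x s⟫ + (h u - h (x s)) - η s * ⟪w' (x (s-1)), u - x s⟫)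
          + (μ + η s) * slope (fun r : ℝ => w (x s + r • (u - x s))) 0 r := by
      filter_upwards [Ioc_mem_nhdsGT (zero_lt_one : (0:ℝ) < 1)] with r hr
      obtain ⟨hr0, hr1⟩ := hr
      have hpt : (1 - r) • x s + r • u = x s + r • (u - x s) := by module
      have hzr : x s + r • (u - x s) ∈ X := by
        have := hXconvex hzX hu (by linarith : (0:ℝ) ≤ 1 - r) hr0.le (by ring)
        rwa [hpt] at this
      have hmin := hxmin s hs _ hzr
      rw [hP, hP] at hmin
      have hh : h (x s + r • (u - x s)) ≤ (1 - r) * h (x s) + r * h u := by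
        have := hhconv.2 hzX hu (by linarith : (0:ℝ) ≤ 1 - r) hr0.le (by ring)
        rw [hpt] at this
        simpa [smul_eq_mul] using this
      have e1 : ⟪g s, x s + r • (u - x s)⟫ = ⟪g s, x s⟫ + r * ⟪g s, u - x s⟫ := by
        rw [inner_add_right, real_inner_smul_right]
      have e2 : ⟪w' (x (s-1)), x s + r • (u - x s) - x (s-1)⟫
          = ⟪w' (x (s-1)), x s - x (s-1)⟫ + r * ⟪w' (x (s-1)), u - x s⟫ := by
        rw [show x s + r • (u - x s) - x (s-1) = (x s - x (s-1)) + r • (u - x s) by abel,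
          inner_add_right, real_inner_smul_right]
      rw [e1, e2] at hmin
      have hkey : 0 ≤ r * (⟪g s, u - x s⟫ + (h u - h (x s)) - η s * ⟪w' (x (s-1)), u - x s⟫)
          + (μ + η s) * (w (x s + r • (u - x s)) - w (x s)) := by nlinarith [hmin, hh]
      have hsl : slope (fun r : ℝ => w (x s + r • (u - x s))) 0 r
          = (w (x s + r • (u - x s)) - w (x s)) / r := by
        rw [slope_def_field]
        norm_num
      rw [hsl]
      have h3 : (r * (⟪g s, u - x s⟫ + (h u - h (x s)) - η s * ⟪w' (x (s-1)), u - x s⟫)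
          + (μ + η s) * (w (x s + r • (u - x s)) - w (x s))) / r
          = (⟪g s, u - x s⟫ + (h u - h (x s)) - η s * ⟪w' (x (s-1)), u - x s⟫)
            + (μ + η s) * ((w (x s + r • (u - x s)) - w (x s)) / r) := by
        field_simp
      have h2 := div_nonneg hkey hr0.le
      rw [h3] at h2
      exact h2
    have hlim : Filter.Tendsto
        (fun r => (⟪g s, u - x s⟫ + (h u - h (x s)) - η s * ⟪w' (x (s-1)), u - x s⟫)
          + (μ + η s) * slope (fun r : ℝ => w (x s + r • (u - x s))) 0 r) (𝓝[>] (0:ℝ))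
        (𝓝 ((⟪g s, u - x s⟫ + (h u - h (x s)) - η s * ⟪w' (x (s-1)), u - x s⟫)
          + (μ + η s) * ⟪w' (x s), u - x s⟫)) :=
      tendsto_const_nhds.add (hslope.const_mul _)
    have hfin := ge_of_tendsto hlim hev
    linarith [hfin]
  -- the ergodic averages
  set y : ℕ → EuclideanSpace ℝ (Fin n) := fun t =>
    if t = 0 then x 0
    else (2 / ((t : ℝ) * ((t : ℝ) + 1))) • ∑ j ∈ Finset.Icc 1 t, (j : ℝ) • x j with hy
  have hy0 : y 0 = x 0 := by simp [hy]
  have hyrec : ∀ t : ℕ, y (t + 1)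
      = ((t : ℝ) / ((t : ℝ) + 2)) • y t + (2 / ((t : ℝ) + 2)) • x (t + 1) := by
    intro t
    rcases Nat.eq_zero_or_pos t with h0 | hpos
    · subst h0
      simp only [hy]
      norm_num [Finset.Icc_self]
    · have ht1 : t ≠ 0 := hpos.ne'
      have htR : (0:ℝ) < (t:ℝ) := by exact_mod_cast hpos
      have hsum : ∑ j ∈ Finset.Icc 1 (t+1), (j:ℝ) • x j
          = (∑ j ∈ Finset.Icc 1 t, (j:ℝ) • x j) + ((t+1 : ℕ):ℝ) • x (t+1) :=
        Finset.sum_Icc_succ_top (by omega) _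
      simp only [hy, if_neg (by omega : ¬ t + 1 = 0), if_neg ht1]
      rw [hsum]
      push_cast
      match_scalars <;> field_simp <;> ring
  have hymem : ∀ t : ℕ, y t ∈ X := by
    intro t
    induction t with
    | zero => rw [hy0]; exact hx0
    | succ t IH =>
      rw [hyrec t]
      have hT2 : (0:ℝ) < (t:ℝ) + 2 := by positivity
      exact hXconvex IH (hxmem (t+1) (by omega))
        (by positivity) (by positivity) (by field_simp)
  have hxurec : ∀ t : ℕ, 1 ≤ t → xu t = y t + (2 / ((t : ℝ) + 1)) • (x (t - 1) - x t) := by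
    intro t ht
    induction t, ht using Nat.le_induction with
    | base =>
      have hy1 : y 1 = x 1 := by
        rw [hyrec 0, hy0]
        norm_num
      rw [hxu 1 le_rfl, hxt 1 le_rfl, hτ 1 le_rfl, hα 1 le_rfl, hxu0, hy1]
      norm_num
    | succ t ht IH =>
      have hT1 : (1:ℝ) ≤ (t:ℝ) := by exact_mod_cast ht
      have e1 : t + 1 - 1 = t := by omega
      have e2 : t + 1 - 2 = t - 1 := by omega
      rw [hxu (t+1) (by omega), hxt (t+1) (by omega), hτ (t+1) (by omega),
        hα (t+1) (by omega), e1, e2, IH, hyrec t]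
      push_cast
      have hne1 : ((t:ℝ) + 1) ≠ 0 := by positivity
      have hne2 : ((t:ℝ) + 2) ≠ 0 := by positivity
      have hne3 : (2 + ((t:ℝ) + 1 - 1)) ≠ 0 := by linarith
      match_scalars <;> field_simp <;> ring
  -- main telescoping induction
  have key : ∀ t : ℕ,
      ((t:ℝ) * ((t:ℝ) + 1) / 2) *
          ((f (y t) + h (y t) + μ * w (y t)) - (f xstar + h xstar + μ * w xstar))
        + 4 * Lf * P (x t) xstar ≤ 4 * Lf * P (x 0) xstar := by
    intro t
    induction t with
    | zero => norm_num
    | succ t IH =>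
      have hs1 : 1 ≤ t + 1 := by omega
      have hT0 : (0:ℝ) ≤ (t:ℝ) := Nat.cast_nonneg t
      have hT1 : (0:ℝ) < (t:ℝ) + 1 := by linarith
      have hT2 : (0:ℝ) < (t:ℝ) + 2 := by linarith
      have hT1ne : ((t:ℝ) + 1) ≠ 0 := ne_of_gt hT1
      have hT2ne : ((t:ℝ) + 2) ≠ 0 := ne_of_gt hT2
      have hsR : ((t+1 : ℕ) : ℝ) = (t:ℝ) + 1 := by push_cast; ring
      have hS : (0:ℝ) < ((t:ℝ)+1) * ((t:ℝ)+2) / 2 := by positivity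
      have hgs : g (t+1) = f' (xu (t+1)) := hg _ hs1
      have hmemxs : x (t+1) ∈ X := hxmem _ hs1
      -- y(t+1) - xu(t+1)
      have hyxu : y (t+1) - xu (t+1) = (2 / ((t:ℝ)+2)) • (x (t+1) - x t) := by
        rw [hxurec (t+1) hs1, Nat.add_sub_cancel, hsR]
        match_scalars <;> field_simp <;> ring
      -- smoothness
      have F1 : f (y (t+1)) ≤ f (xu (t+1)) + ⟪g (t+1), y (t+1) - xu (t+1)⟫
          + Lf / 2 * ‖y (t+1) - xu (t+1)‖ ^ 2 := by
        rw [hgs]; exact pdgDescent hLf hfdiff hfLip (xu (t+1)) (y (t+1))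
      have e2 : ‖y (t+1) - xu (t+1)‖ ^ 2 = (2/((t:ℝ)+2))^2 * ‖x (t+1) - x t‖ ^ 2 := by
        rw [hyxu, norm_smul, mul_pow, Real.norm_eq_abs, sq_abs]
      -- inner splitting
      have hsplitvec : (((t:ℝ)+1) * ((t:ℝ)+2) / 2) • (y (t+1) - xu (t+1))
          = ((t:ℝ) * ((t:ℝ)+1) / 2) • (y t - xu (t+1))
            + ((t:ℝ)+1) • (x (t+1) - xu (t+1)) := by
        rw [hyrec t]
        match_scalars <;> field_simp <;> ring
      have eInner : (((t:ℝ)+1) * ((t:ℝ)+2) / 2) * ⟪g (t+1), y (t+1) - xu (t+1)⟫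
          = ((t:ℝ) * ((t:ℝ)+1) / 2) * ⟪g (t+1), y t - xu (t+1)⟫
            + ((t:ℝ)+1) * ⟪g (t+1), x (t+1) - xu (t+1)⟫ := by
        have := congrArg (fun v => ⟪g (t+1), v⟫) hsplitvec
        simpa only [inner_add_right, real_inner_smul_right] using this
      -- convexity lower bounds
      have F3 : f (xu (t+1)) + ⟪g (t+1), y t - xu (t+1)⟫ ≤ f (y t) := by
        rw [hgs]; exact pdgConvexLower hfconv hfdiff _ _
      have F4 : f (xu (t+1)) + ⟪g (t+1), xstar - xu (t+1)⟫ ≤ f xstar := by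
        rw [hgs]; exact pdgConvexLower hfconv hfdiff _ _
      have F5 : ⟪g (t+1), x (t+1) - xu (t+1)⟫
          = ⟪g (t+1), xstar - xu (t+1)⟫ + ⟪g (t+1), x (t+1) - xstar⟫ := by
        rw [← inner_add_right]
        congr 1
        abel
      -- variational inequality at xstar
      have hVI := VI (t+1) hs1 xstar hxstarX
      rw [Nat.add_sub_cancel] at hVI
      have htp : ⟪w' (x (t+1)), xstar - x (t+1)⟫ - ⟪w' (x t), xstar - x (t+1)⟫
          = P (x t) xstar - P (x t) (x (t+1)) - P (x (t+1)) xstar := tp _ _ _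
      rw [htp] at hVI
      have hη1 : η (t+1) = 4 * Lf / ((t:ℝ)+1) := by rw [hη _ hs1, hsR]
      rw [hη1] at hVI
      have hflip : ⟪g (t+1), xstar - x (t+1)⟫ = -⟪g (t+1), x (t+1) - xstar⟫ := by
        rw [← neg_sub (x (t+1)) xstar, inner_neg_right]
      rw [hflip] at hVI
      have hw8 : ⟪w' (x (t+1)), xstar - x (t+1)⟫ ≤ w xstar - w (x (t+1)) := by
        have := hwineq (x (t+1)) hmemxs xstar hxstarX
        nlinarith [sq_nonneg ‖xstar - x (t+1)‖]
      have hw8' : μ * ⟪w' (x (t+1)), xstar - x (t+1)⟫ ≤ μ * (w xstar - w (x (t+1))) :=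
        mul_le_mul_of_nonneg_left hw8 hμ
      have F6 : ⟪g (t+1), x (t+1) - xstar⟫
          ≤ (h xstar - h (x (t+1))) + μ * (w xstar - w (x (t+1)))
            + (4 * Lf / ((t:ℝ)+1)) * (P (x t) xstar - P (x t) (x (t+1)) - P (x (t+1)) xstar) := by
        linarith [hVI, hw8']
      -- convex-combination upper bounds for h and w
      have hab : (t:ℝ)/((t:ℝ)+2) + 2/((t:ℝ)+2) = 1 := by field_simp
      have F10 : h (y (t+1)) ≤ ((t:ℝ)/((t:ℝ)+2)) * h (y t) + (2/((t:ℝ)+2)) * h (x (t+1)) := by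
        have hc := hhconv.2 (hymem t) hmemxs (by positivity : (0:ℝ) ≤ (t:ℝ)/((t:ℝ)+2))
          (by positivity : (0:ℝ) ≤ 2/((t:ℝ)+2)) hab
        rw [← hyrec t] at hc
        simpa [smul_eq_mul] using hc
      have F11 : w (y (t+1)) ≤ ((t:ℝ)/((t:ℝ)+2)) * w (y t) + (2/((t:ℝ)+2)) * w (x (t+1)) := by
        have h1 := hwineq (y (t+1)) (hymem (t+1)) (y t) (hymem t)
        have h2 := hwineq (y (t+1)) (hymem (t+1)) (x (t+1)) hmemxs
        have h0 : ((t:ℝ)/((t:ℝ)+2)) • (y t - y (t+1)) + (2/((t:ℝ)+2)) • (x (t+1) - y (t+1))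
            = (0 : EuclideanSpace ℝ (Fin n)) := by
          rw [hyrec t]
          match_scalars <;> field_simp <;> ring
        have hinner : ((t:ℝ)/((t:ℝ)+2)) * ⟪w' (y (t+1)), y t - y (t+1)⟫
            + (2/((t:ℝ)+2)) * ⟪w' (y (t+1)), x (t+1) - y (t+1)⟫ = 0 := by
          rw [← real_inner_smul_right, ← real_inner_smul_right, ← inner_add_right, h0,
            inner_zero_right]
        have m1 := mul_le_mul_of_nonneg_left h1 (by positivity : (0:ℝ) ≤ (t:ℝ)/((t:ℝ)+2))
        have m2 := mul_le_mul_of_nonneg_left h2 (by positivity : (0:ℝ) ≤ 2/((t:ℝ)+2))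
        have hsum1 : ((t:ℝ)/((t:ℝ)+2)) * w (y (t+1)) + (2/((t:ℝ)+2)) * w (y (t+1))
            = w (y (t+1)) := by
          linear_combination (w (y (t+1))) * hab
        have hq1 : (0:ℝ) ≤ ((t:ℝ)/((t:ℝ)+2)) * ((1/4) * ‖y t - y (t+1)‖^2) := by positivity
        have hq2 : (0:ℝ) ≤ (2/((t:ℝ)+2)) * ((1/4) * ‖x (t+1) - y (t+1)‖^2) := by positivity
        nlinarith [m1, m2, hinner, hsum1, hq1, hq2]
      -- quarter-bound on the Bregman distance of consecutive iterates
      have F9 : (1/4) * ‖x (t+1) - x t‖^2 ≤ P (x t) (x (t+1)) := by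
        have := hwineq (x t) (hxtX t) (x (t+1)) hmemxs
        rw [hP]
        linarith
      have A10 : Lf * ‖x (t+1) - x t‖^2 ≤ 4 * Lf * P (x t) (x (t+1)) := by
        have := mul_le_mul_of_nonneg_left F9 (by positivity : (0:ℝ) ≤ 4*Lf)
        linarith
      -- scaled versions of all the estimates
      have mF1 := mul_le_mul_of_nonneg_left F1 hS.le
      have eN : (((t:ℝ)+1) * ((t:ℝ)+2) / 2) * (Lf / 2 * ‖y (t+1) - xu (t+1)‖ ^ 2)
          ≤ Lf * ‖x (t+1) - x t‖^2 := by
        rw [e2]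
        have eNid : (((t:ℝ)+1) * ((t:ℝ)+2) / 2)
              * (Lf / 2 * ((2/((t:ℝ)+2))^2 * ‖x (t+1) - x t‖^2))
            = (Lf * ‖x (t+1) - x t‖^2) * (((t:ℝ)+1) / ((t:ℝ)+2)) := by
          field_simp
        rw [eNid]
        have hfrac : ((t:ℝ)+1) / ((t:ℝ)+2) ≤ 1 := by
          rw [div_le_one hT2]; linarith
        nlinarith [mul_nonneg hLf.le (sq_nonneg ‖x (t+1) - x t‖), hfrac]
      have A1 : (((t:ℝ)+1) * ((t:ℝ)+2) / 2) * f (y (t+1))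
          ≤ (((t:ℝ)+1) * ((t:ℝ)+2) / 2) * f (xu (t+1))
            + ((t:ℝ) * ((t:ℝ)+1) / 2) * ⟪g (t+1), y t - xu (t+1)⟫
            + ((t:ℝ)+1) * ⟪g (t+1), x (t+1) - xu (t+1)⟫
            + Lf * ‖x (t+1) - x t‖^2 := by
        linarith [mF1, eInner, eN]
      have A2 := mul_le_mul_of_nonneg_left F3 (by positivity : (0:ℝ) ≤ (t:ℝ) * ((t:ℝ)+1) / 2)
      have A3 := mul_le_mul_of_nonneg_left F4 hT1.le
      have A4 : ((t:ℝ)+1) * ⟪g (t+1), x (t+1) - xu (t+1)⟫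
          = ((t:ℝ)+1) * ⟪g (t+1), xstar - xu (t+1)⟫
            + ((t:ℝ)+1) * ⟪g (t+1), x (t+1) - xstar⟫ := by
        linear_combination ((t:ℝ)+1) * F5
      have m5 := mul_le_mul_of_nonneg_left F6 hT1.le
      have e5 : ((t:ℝ)+1) * ((h xstar - h (x (t+1))) + μ * (w xstar - w (x (t+1)))
            + (4 * Lf / ((t:ℝ)+1)) * (P (x t) xstar - P (x t) (x (t+1)) - P (x (t+1)) xstar))
          = ((t:ℝ)+1) * (h xstar - h (x (t+1))) + ((t:ℝ)+1) * (μ * (w xstar - w (x (t+1))))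
            + 4 * Lf * (P (x t) xstar - P (x t) (x (t+1)) - P (x (t+1)) xstar) := by
        field_simp
      rw [e5] at m5
      have m7 := mul_le_mul_of_nonneg_left F10 hS.le
      have e7 : (((t:ℝ)+1) * ((t:ℝ)+2) / 2)
            * (((t:ℝ)/((t:ℝ)+2)) * h (y t) + (2/((t:ℝ)+2)) * h (x (t+1)))
          = ((t:ℝ) * ((t:ℝ)+1) / 2) * h (y t) + ((t:ℝ)+1) * h (x (t+1)) := by
        field_simp
      rw [e7] at m7
      have m8 := mul_le_mul_of_nonneg_left F11 (mul_nonneg hμ hS.le)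
      have e8 : (μ * (((t:ℝ)+1) * ((t:ℝ)+2) / 2))
            * (((t:ℝ)/((t:ℝ)+2)) * w (y t) + (2/((t:ℝ)+2)) * w (x (t+1)))
          = ((t:ℝ) * ((t:ℝ)+1) / 2) * (μ * w (y t)) + ((t:ℝ)+1) * (μ * w (x (t+1))) := by
        field_simp
      rw [e8] at m8
      rw [hsR]
      linarith [IH, A1, A2, A3, A4, m5, m7, m8, A10]
  -- conclusion
  have hk0 : (0:ℝ) < (k:ℝ) := by exact_mod_cast hk
  have hyk : y k = xbar := by
    rw [hxbar]
    simp only [hy]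
    rw [if_neg (show ¬ k = 0 by omega)]
  have hkey := key k
  rw [hyk] at hkey
  have hPk : 0 ≤ P (x k) xstar := by
    have := hwineq (x k) (hxtX k) xstar hxstarX
    rw [hP]
    nlinarith [sq_nonneg ‖xstar - x k‖]
  have hSk : (0:ℝ) < (k:ℝ) * ((k:ℝ)+1) / 2 := by positivity
  rw [show 8 * Lf / ((k:ℝ) * ((k:ℝ) + 1)) * P (x 0) xstar
      = (4 * Lf * P (x 0) xstar) / ((k:ℝ) * ((k:ℝ)+1) / 2) by field_simp; ring,
    le_div_iff₀ hSk]
  linarith [hkey, mul_nonneg (by positivity : (0:ℝ) ≤ 4*Lf) hPk]
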